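/- Let G be a finite group which can be written as G = AB, where A and B are abelian subgroups of G of relatively prime orders and A is normal in G. Then m*(G) = |A|^2·|C_B(A)|^2 and CD(G) = {A·C_B(A)}, where C_B(A) = B ∩ C_G(A). -/

import Mathlib

open Subgroup
open scoped Pointwise
set_option linter.unusedSectionVars false

section Helpers
variable {G : Type*} [Group G]

lemma myCardSubgroupOf (H K : Subgroup G) :
    Nat.card (H.subgroupOf K) = Nat.card (H ⊓ K : Subgroup G) := by
  rw [← inf_subgroupOf_right]
  exact Nat.card_congr (subgroupOfEquivOfLe inf_le_right).toEquiv

lemma myCardMul [Finite G] (H N : Subgroup G) [N.Normal] :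
    Nat.card H * Nat.card N =
      Nat.card (H ⊔ N : Subgroup G) * Nat.card (N ⊓ H : Subgroup G) := by
  have hc : Nat.card (H ⧸ N.subgroupOf H) = Nat.card ((H ⊔ N : Subgroup G) ⧸ N.subgroupOf (H ⊔ N)) :=
    Nat.card_congr (QuotientGroup.quotientInfEquivProdNormalQuotient H N).toEquiv
  have h1 := Subgroup.card_eq_card_quotient_mul_card_subgroup (N.subgroupOf H)
  have h2 := Subgroup.card_eq_card_quotient_mul_card_subgroup (N.subgroupOf (H ⊔ N))
  have h3 : Nat.card (N.subgroupOf H) = Nat.card (N ⊓ H : Subgroup G) := myCardSubgroupOf N H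
  have h4 : Nat.card (N.subgroupOf (H ⊔ N)) = Nat.card N :=
    Nat.card_congr (subgroupOfEquivOfLe le_sup_right).toEquiv
  rw [h1, h2, h3, h4, hc]
  ring

end Helpers

section FixLemma

lemma fix_of_coprime {N : Type*} [Group N] [Finite N] (σ : MulAut N) {n : ℕ}
    (hσ : σ ^ n = 1) (hcop : Nat.Coprime n (Nat.card N)) (N₁ : Subgroup N)
    (hfix : ∀ y ∈ N₁, σ y = y) (hq : ∀ a : N, a⁻¹ * σ a ∈ N₁) : ∀ a : N, σ a = a := by
  intro a
  have key : ∀ k : ℕ, (σ ^ k) a = a * (a⁻¹ * σ a) ^ k := by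
    intro k
    induction k with
    | zero => simp
    | succ k ih =>
      have h1 : (σ ^ (k + 1)) a = σ ((σ ^ k) a) := by
        rw [pow_succ']; rfl
      rw [h1, ih, map_mul, map_pow, hfix _ (hq a), pow_succ', ← mul_assoc,
        mul_inv_cancel_left]
  have hn : (a⁻¹ * σ a) ^ n = 1 := by
    have := key n
    rw [hσ] at this
    simpa using this.symm
  have h1 : orderOf (a⁻¹ * σ a) ∣ n := orderOf_dvd_of_pow_eq_one hn
  have h2 : orderOf (a⁻¹ * σ a) ∣ Nat.card N := orderOf_dvd_natCard _
  have : orderOf (a⁻¹ * σ a) = 1 := Nat.dvd_one.mp (hcop ▸ Nat.dvd_gcd h1 h2)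
  have : a⁻¹ * σ a = 1 := orderOf_eq_one_iff.mp this
  rw [← mul_left_cancel_iff (a := a⁻¹)]
  simpa using this

end FixLemma

section Actions

variable {Q N : Type*} [Group Q] [Group N]

/-- Restriction of an action by automorphisms to an invariant subgroup. -/
def restrictAut (φ : Q →* MulAut N) (N₁ : Subgroup N)
    (hinv : ∀ (q : Q) (a : N), a ∈ N₁ → φ q a ∈ N₁) : Q →* MulAut N₁ :=
  MonoidHom.mk'
    (fun q =>
      { toFun := fun a => ⟨φ q a, hinv q a a.2⟩
        invFun := fun a => ⟨φ q⁻¹ a, hinv q⁻¹ a a.2⟩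
        left_inv := fun a => by
          ext
          simp only
          rw [← MulAut.mul_apply, ← map_mul, inv_mul_cancel, map_one, MulAut.one_apply]
        right_inv := fun a => by
          ext
          simp only
          rw [← MulAut.mul_apply, ← map_mul, mul_inv_cancel, map_one, MulAut.one_apply]
        map_mul' := fun a b => by
          refine Subtype.ext ?_
          simp })
    (fun q r => by
      ext a
      simp [MulAut.mul_apply])

@[simp] lemma restrictAut_apply (φ : Q →* MulAut N) (N₁ : Subgroup N)
    (hinv : ∀ (q : Q) (a : N), a ∈ N₁ → φ q a ∈ N₁) (q : Q) (a : N₁) :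
    (restrictAut φ N₁ hinv q a : N) = φ q a := rfl

/-- The action induced on the quotient by an invariant normal subgroup. -/
def quotAut (φ : Q →* MulAut N) (N₁ : Subgroup N) [N₁.Normal]
    (hinv : ∀ (q : Q) (a : N), a ∈ N₁ → φ q a ∈ N₁) : Q →* MulAut (N ⧸ N₁) :=
  MonoidHom.mk'
    (fun q =>
      MonoidHom.toMulEquiv
        (QuotientGroup.map N₁ N₁ (φ q) (fun a ha => hinv q a ha))
        (QuotientGroup.map N₁ N₁ (φ q⁻¹) (fun a ha => hinv q⁻¹ a ha))
        (by
          ext a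
          simp only [MonoidHom.comp_apply, MonoidHom.id_apply, QuotientGroup.map_mk',
            QuotientGroup.map_mk, QuotientGroup.mk'_apply, MulEquiv.coe_toMonoidHom]
          simp [map_inv, MulAut.inv_def]
          exact congrArg QuotientGroup.mk ((φ q).symm_apply_apply a))
        (by
          ext a
          simp only [MonoidHom.comp_apply, MonoidHom.id_apply, QuotientGroup.map_mk',
            QuotientGroup.map_mk, QuotientGroup.mk'_apply, MulEquiv.coe_toMonoidHom]
          simp [map_inv, MulAut.inv_def]
          exact congrArg QuotientGroup.mk ((φ q).apply_symm_apply a)))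
    (fun q r => by
      ext a
      refine QuotientGroup.induction_on a (fun x => ?_)
      simp [MonoidHom.toMulEquiv, QuotientGroup.map_mk, MulAut.mul_apply]
      rfl)

@[simp] lemma quotAut_apply_mk (φ : Q →* MulAut N) (N₁ : Subgroup N) [N₁.Normal]
    (hinv : ∀ (q : Q) (a : N), a ∈ N₁ → φ q a ∈ N₁) (q : Q) (a : N) :
    quotAut φ N₁ hinv q (QuotientGroup.mk a) = QuotientGroup.mk (φ q a) := rfl

/-- Fixed points of an action by automorphisms, as a subgroup. -/
def fixedSub (φ : Q →* MulAut N) : Subgroup N where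
  carrier := {a | ∀ q : Q, φ q a = a}
  one_mem' := fun q => map_one _
  mul_mem' := fun {a b} ha hb q => by rw [map_mul, ha q, hb q]
  inv_mem' := fun {a} ha q => by rw [map_inv, ha q]

@[simp] lemma mem_fixedSub (φ : Q →* MulAut N) (a : N) :
    a ∈ fixedSub φ ↔ ∀ q : Q, φ q a = a := Iff.rfl

end Actions
section ClaimB
universe u

theorem claimB : ∀ (n : ℕ) {Q N : Type u} [Group Q] [Group N] [Finite Q] [Finite N],
    Nat.card N ≤ n → (∀ a b : Q, a * b = b * a) → (∀ a b : N, a * b = b * a) →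
    ∀ (φ : Q →* MulAut N), Function.Injective φ →
    Nat.Coprime (Nat.card Q) (Nat.card N) → Nat.card Q ≤ Nat.card N := by
  intro n
  induction n with
  | zero =>
    intro Q N _ _ _ _ hn
    have := Nat.card_pos (α := N)
    omega
  | succ n ih =>
    intro Q N _ _ _ _ hn hQ hN φ hinj hcop
    by_cases hx : ∃ x : N, x ≠ 1
    · obtain ⟨x, hx1⟩ := hx
      set orb : Set N := Set.range (fun q : Q => φ q x) with horb
      set N₁ : Subgroup N := Subgroup.closure orb with hN₁def
      have hxN₁ : x ∈ N₁ := Subgroup.subset_closure ⟨1, by simp⟩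
      have hinvN₁ : ∀ (q : Q) (a : N), a ∈ N₁ → φ q a ∈ N₁ := by
        intro q a ha
        induction ha using closure_induction with
        | mem y hy =>
          obtain ⟨q', rfl⟩ := hy
          refine Subgroup.subset_closure ⟨q * q', ?_⟩
          show φ (q * q') x = φ q (φ q' x)
          rw [map_mul, MulAut.mul_apply]
        | one => rw [map_one]; exact one_mem _
        | mul y z hy hz py pz => rw [map_mul]; exact mul_mem py pz
        | inv y hy py => rw [map_inv]; exact inv_mem py
      haveI : N₁.Normal := by
        refine ⟨fun m hm g => ?_⟩
        have h : g * m * g⁻¹ = m := by rw [hN g m, mul_assoc, mul_inv_cancel, mul_one]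
        rwa [h]
      by_cases htop : N₁ = ⊤
      · -- free orbit case
        have hstab : ∀ q : Q, φ q x = x → ∀ a : N, φ q a = a := by
          intro q hqx a
          have ha : a ∈ N₁ := htop ▸ Subgroup.mem_top a
          induction ha using closure_induction with
          | mem y hy =>
            obtain ⟨q', rfl⟩ := hy
            rw [← MulAut.mul_apply, ← map_mul, hQ q q', map_mul, MulAut.mul_apply, hqx]
          | one => rw [map_one]
          | mul y z hy hz py pz => rw [map_mul, py, pz]
          | inv y hy py => rw [map_inv, py]
        have hinj2 : Function.Injective (fun q : Q => φ q x) := by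
          intro q q' h
          simp only at h
          have h2 : φ (q'⁻¹ * q) x = x := by
            rw [map_mul, MulAut.mul_apply, h, ← MulAut.mul_apply, ← map_mul,
              inv_mul_cancel, map_one, MulAut.one_apply]
          have h3 : φ (q'⁻¹ * q) = 1 := by
            ext a
            rw [hstab _ h2 a, MulAut.one_apply]
          have h4 : q'⁻¹ * q = 1 := hinj (by rw [h3, map_one])
          exact (inv_mul_eq_one.mp h4).symm
        exact Nat.card_le_card_of_injective _ hinj2
      · -- recursion case
        set ρ : Q →* MulAut N₁ := restrictAut φ N₁ hinvN₁ with hρ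
        set Q₁ : Subgroup Q := ρ.ker with hQ₁
        set ψ : Q →* MulAut (N ⧸ N₁) := quotAut φ N₁ hinvN₁ with hψ
        -- card bounds
        have hcards : Nat.card N = Nat.card (N ⧸ N₁) * Nat.card N₁ :=
          Subgroup.card_eq_card_quotient_mul_card_subgroup N₁
        have hq2 : 2 ≤ Nat.card (N ⧸ N₁) := by
          have h1 : N₁.index ≠ 1 := fun h => htop (Subgroup.index_eq_one.mp h)
          have h2 : N₁.index = Nat.card (N ⧸ N₁) := rfl
          have h3 : 0 < Nat.card (N ⧸ N₁) := Nat.card_pos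
          omega
        have hn2 : 2 ≤ Nat.card N₁ :=
          (Subgroup.one_lt_card_iff_ne_bot N₁).mpr (fun h => hx1 (by
            have := hxN₁
            rw [h, Subgroup.mem_bot] at this
            exact this))
        have hcard1 : Nat.card N₁ ≤ n := by
          have hp : 0 < Nat.card N₁ := Nat.card_pos
          nlinarith
        have hcard2 : Nat.card (N ⧸ N₁) ≤ n := by
          have hp : 0 < Nat.card (N ⧸ N₁) := Nat.card_pos
          nlinarith
        -- first application: Q ⧸ Q₁ acting on N₁
        have hQb : Nat.card (Q ⧸ Q₁) ≤ Nat.card N₁ := by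
          refine ih hcard1 ?_ ?_ (QuotientGroup.kerLift ρ) (QuotientGroup.kerLift_injective ρ) ?_
          · intro a b
            refine QuotientGroup.induction_on a (fun xa => ?_)
            refine QuotientGroup.induction_on b (fun xb => ?_)
            rw [← QuotientGroup.mk_mul, ← QuotientGroup.mk_mul, hQ]
          · intro a b
            exact Subtype.ext (hN a b)
          · exact Nat.Coprime.coprime_dvd_right (Subgroup.card_subgroup_dvd_card N₁)
              (Nat.Coprime.coprime_dvd_left (Subgroup.card_quotient_dvd_card Q₁) hcop)
        -- second application: Q₁ acting on N ⧸ N₁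
        have hQ1b : Nat.card Q₁ ≤ Nat.card (N ⧸ N₁) := by
          refine ih hcard2 ?_ ?_ (ψ.comp Q₁.subtype) ?_ ?_
          · intro a b
            exact Subtype.ext (hQ a b)
          · intro a b
            refine QuotientGroup.induction_on a (fun xa => ?_)
            refine QuotientGroup.induction_on b (fun xb => ?_)
            rw [← QuotientGroup.mk_mul, ← QuotientGroup.mk_mul, hN]
          · rw [injective_iff_map_eq_one]
            intro q hq1
            have hfix1 : ∀ y ∈ N₁, φ (q : Q) y = y := by
              intro y hy
              have : ρ (q : Q) = 1 := q.2
              have h5 := congrArg (fun (e : MulAut N₁) => (e ⟨y, hy⟩ : N)) this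
              simpa [hρ] using h5
            have hq3 : ∀ a : N, a⁻¹ * φ (q : Q) a ∈ N₁ := by
              intro a
              have h6 : ψ (q : Q) (QuotientGroup.mk a) = QuotientGroup.mk a := by
                have h : ψ.comp Q₁.subtype q = 1 := hq1
                rw [MonoidHom.comp_apply] at h
                have h' : ψ (q : Q) = 1 := h
                rw [h', MulAut.one_apply]
              rw [hψ, quotAut_apply_mk] at h6
              exact (QuotientGroup.eq).mp h6.symm
            have h7 : ∀ a : N, φ (q : Q) a = a := by
              refine fix_of_coprime (φ (q : Q)) (n := orderOf (q : Q)) ?_ ?_ N₁ hfix1 hq3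
              · rw [← map_pow, pow_orderOf_eq_one, map_one]
              · exact Nat.Coprime.coprime_dvd_left
                  ((orderOf_dvd_natCard (q : Q)).trans dvd_rfl) hcop
            have h8 : φ (q : Q) = 1 := by
              ext a
              rw [h7 a, MulAut.one_apply]
            have h9 : (q : Q) = 1 := hinj (by rw [h8, map_one])
            exact Subtype.ext h9
          · exact Nat.Coprime.coprime_dvd_right (Subgroup.card_quotient_dvd_card N₁)
              (Nat.Coprime.coprime_dvd_left (Subgroup.card_subgroup_dvd_card Q₁) hcop)
        calc Nat.card Q = Nat.card (Q ⧸ Q₁) * Nat.card Q₁ :=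
              Subgroup.card_eq_card_quotient_mul_card_subgroup Q₁
          _ ≤ Nat.card N₁ * Nat.card (N ⧸ N₁) := Nat.mul_le_mul hQb hQ1b
          _ = Nat.card N := by rw [mul_comm]; exact hcards.symm
    · -- N trivial
      push_neg at hx
      have h1 : ∀ q : Q, q = 1 := by
        intro q
        refine hinj ?_
        ext a
        exact (hx _).trans (hx _).symm
      have h2 : Nat.card Q = 1 := by
        have : Subsingleton Q := ⟨fun a b => by rw [h1 a, h1 b]⟩
        exact Nat.card_eq_one_iff_unique.mpr ⟨⟨fun a b => by rw [h1 a, h1 b]⟩, ⟨1⟩⟩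
      have := Nat.card_pos (α := N)
      omega

end ClaimB

section ClaimB2
universe v
variable {Q N : Type v} [Group Q] [Group N] [Finite Q] [Finite N]

theorem claimB' (hQ : ∀ a b : Q, a * b = b * a) (hN : ∀ a b : N, a * b = b * a)
    (φ : Q →* MulAut N) (hinj : Function.Injective φ)
    (hcop : Nat.Coprime (Nat.card Q) (Nat.card N)) : Nat.card Q ≤ Nat.card N :=
  claimB (Nat.card N) le_rfl hQ hN φ hinj hcop

theorem claimBplus (hQ : ∀ a b : Q, a * b = b * a) (hN : ∀ a b : N, a * b = b * a)
    (φ : Q →* MulAut N) (hinj : Function.Injective φ)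
    (hcop : Nat.Coprime (Nat.card Q) (Nat.card N)) :
    Nat.card Q * Nat.card (fixedSub φ) ≤ Nat.card N ∧
      (Nat.card Q * Nat.card (fixedSub φ) = Nat.card N → Nat.card Q = 1) := by
  set F := fixedSub φ with hF
  haveI : F.Normal := by
    refine ⟨fun m hm g => ?_⟩
    have h : g * m * g⁻¹ = m := by rw [hN g m, mul_assoc, mul_inv_cancel, mul_one]
    rwa [h]
  have hinvF : ∀ (q : Q) (a : N), a ∈ F → φ q a ∈ F := by
    intro q a ha
    have h := ha q
    rw [h]
    exact ha
  set ψ : Q →* MulAut (N ⧸ F) := quotAut φ F hinvF with hψ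
  have hinjψ : Function.Injective ψ := by
    rw [injective_iff_map_eq_one]
    intro q hq1
    have hfix : ∀ y ∈ F, φ q y = y := fun y hy => hy q
    have hq3 : ∀ a : N, a⁻¹ * φ q a ∈ F := by
      intro a
      have h6 : ψ q (QuotientGroup.mk a) = QuotientGroup.mk a := by
        rw [hq1, MulAut.one_apply]
      rw [hψ, quotAut_apply_mk] at h6
      exact (QuotientGroup.eq).mp h6.symm
    have h7 := fix_of_coprime (φ q) (n := orderOf q)
      (by rw [← map_pow, pow_orderOf_eq_one, map_one])
      (Nat.Coprime.coprime_dvd_left (orderOf_dvd_natCard q) hcop) F hfix hq3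
    have h8 : φ q = 1 := by ext a; rw [h7 a, MulAut.one_apply]
    exact hinj (by rw [h8, map_one])
  have h1 : Nat.card Q ≤ Nat.card (N ⧸ F) := by
    refine claimB' hQ ?_ ψ hinjψ ?_
    · intro a b
      refine QuotientGroup.induction_on a (fun xa => ?_)
      refine QuotientGroup.induction_on b (fun xb => ?_)
      rw [← QuotientGroup.mk_mul, ← QuotientGroup.mk_mul, hN]
    · exact Nat.Coprime.coprime_dvd_right (Subgroup.card_quotient_dvd_card F) hcop
  have h2 : Nat.card N = Nat.card (N ⧸ F) * Nat.card F :=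
    Subgroup.card_eq_card_quotient_mul_card_subgroup F
  constructor
  · calc Nat.card Q * Nat.card F ≤ Nat.card (N ⧸ F) * Nat.card F :=
          Nat.mul_le_mul_right _ h1
      _ = Nat.card N := h2.symm
  · intro heq
    have hFpos : 0 < Nat.card F := Nat.card_pos
    have h3 : Nat.card Q = Nat.card (N ⧸ F) :=
      Nat.eq_of_mul_eq_mul_right hFpos (heq.trans h2)
    have h5 : Nat.Coprime (Nat.card Q) (Nat.card Q) := by
      rw [h3] at hcop ⊢
      exact Nat.Coprime.coprime_dvd_right (Subgroup.card_quotient_dvd_card F) hcop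
    rw [Nat.Coprime, Nat.gcd_self] at h5
    exact h5

end ClaimB2


section MainG

variable {G : Type*} [Group G] [Finite G] {A B : Subgroup G}

lemma gABinf (hcop : Nat.Coprime (Nat.card A) (Nat.card B)) : A ⊓ B = ⊥ := by
  have h1 : Nat.card (A ⊓ B : Subgroup G) ∣ Nat.card A := Subgroup.card_dvd_of_le inf_le_left
  have h2 : Nat.card (A ⊓ B : Subgroup G) ∣ Nat.card B := Subgroup.card_dvd_of_le inf_le_right
  have h3 : Nat.card (A ⊓ B : Subgroup G) ∣ Nat.gcd (Nat.card A) (Nat.card B) :=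
    Nat.dvd_gcd h1 h2
  rw [Nat.Coprime.gcd_eq_one hcop] at h3
  exact Subgroup.card_eq_one.mp (Nat.dvd_one.mp h3)

lemma gDecomp [A.Normal] (hcop : Nat.Coprime (Nat.card A) (Nat.card B))
    (hAB : ∀ g : G, ∃ a ∈ A, ∃ b ∈ B, g = a * b) (H : Subgroup G) (hAH : A ≤ H) :
    Nat.card H = Nat.card A * Nat.card (B ⊓ H : Subgroup G) := by
  have hsup : A ⊔ (B ⊓ H) = H := by
    refine le_antisymm (sup_le hAH inf_le_right) ?_
    intro g hg
    obtain ⟨a, ha, b, hb, rfl⟩ := hAB g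
    have hbH : b ∈ H := by
      have h := mul_mem (inv_mem (hAH ha)) hg
      simpa using h
    exact mul_mem ((le_sup_left : A ≤ A ⊔ (B ⊓ H)) ha)
      ((le_sup_right : B ⊓ H ≤ A ⊔ (B ⊓ H)) (Subgroup.mem_inf.mpr ⟨hb, hbH⟩))
  have hform := myCardMul (B ⊓ H) A
  have h0 : (B ⊓ H) ⊔ A = H := by rw [sup_comm]; exact hsup
  have h1 : A ⊓ (B ⊓ H) = ⊥ := by
    have : A ⊓ (B ⊓ H) ≤ A ⊓ B := inf_le_inf_left A inf_le_left
    rw [gABinf hcop] at this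
    exact le_bot_iff.mp this
  rw [h0, h1, Subgroup.card_bot, mul_one] at hform
  rw [← hform]; ring

lemma gFactor [A.Normal] (hcop : Nat.Coprime (Nat.card A) (Nat.card B))
    (hAB : ∀ g : G, ∃ a ∈ A, ∃ b ∈ B, g = a * b) (H : Subgroup G) :
    Nat.card H =
      Nat.card (A ⊓ H : Subgroup G) * Nat.card (B ⊓ (A ⊔ H) : Subgroup G) := by
  have h1 := myCardMul H A
  have h2 : Nat.card (A ⊔ H : Subgroup G) =
      Nat.card A * Nat.card (B ⊓ (A ⊔ H) : Subgroup G) :=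
    gDecomp hcop hAB (A ⊔ H) le_sup_left
  have hApos : 0 < Nat.card A := Nat.card_pos
  apply Nat.eq_of_mul_eq_mul_left hApos
  calc Nat.card A * Nat.card H = Nat.card H * Nat.card A := mul_comm _ _
    _ = Nat.card (H ⊔ A : Subgroup G) * Nat.card (A ⊓ H : Subgroup G) := h1
    _ = Nat.card (A ⊔ H : Subgroup G) * Nat.card (A ⊓ H : Subgroup G) := by rw [sup_comm]
    _ = (Nat.card A * Nat.card (B ⊓ (A ⊔ H) : Subgroup G)) * Nat.card (A ⊓ H : Subgroup G) := by
        rw [h2]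
    _ = Nat.card A * (Nat.card (A ⊓ H : Subgroup G) * Nat.card (B ⊓ (A ⊔ H) : Subgroup G)) := by
        ring

lemma gCentA [A.Normal] (hA : IsMulCommutative A)
    (hAB : ∀ g : G, ∃ a ∈ A, ∃ b ∈ B, g = a * b) :
    Subgroup.centralizer (A : Set G) = A ⊔ (B ⊓ Subgroup.centralizer (A : Set G)) := by
  haveI := hA
  refine le_antisymm ?_ (sup_le (Subgroup.le_centralizer A) inf_le_right)
  intro g hg
  obtain ⟨a, ha, b, hb, rfl⟩ := hAB g
  have haC : a ∈ Subgroup.centralizer (A : Set G) := Subgroup.le_centralizer A ha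
  have hbC : b ∈ Subgroup.centralizer (A : Set G) := by
    have h := mul_mem (inv_mem haC) hg
    simpa using h
  exact mul_mem
    ((le_sup_left : A ≤ A ⊔ (B ⊓ Subgroup.centralizer (A : Set G))) ha)
    ((le_sup_right : B ⊓ Subgroup.centralizer (A : Set G) ≤ _)
      (Subgroup.mem_inf.mpr ⟨hb, hbC⟩))

lemma gKey (hA : IsMulCommutative A) (hB : IsMulCommutative B) :
    ∀ (a b a' b' : G), a ∈ A → b ∈ B → a' ∈ A → b' ∈ B →
      b ∈ Subgroup.centralizer (A : Set G) → b' ∈ Subgroup.centralizer (A : Set G) →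
      (a * b) * (a' * b') = (a' * b') * (a * b) := by
  haveI := hA; haveI := hB
  intro a b a' b' ha hb ha' hb' hbc hb'c
  have c1 : a * a' = a' * a := Subgroup.mul_comm_of_mem_isMulCommutative A ha ha'
  have c2 : b * b' = b' * b := Subgroup.mul_comm_of_mem_isMulCommutative B hb hb'
  have c3 : a' * b = b * a' := Subgroup.mem_centralizer_iff.mp hbc a' ha'
  have c4 : a * b' = b' * a := Subgroup.mem_centralizer_iff.mp hb'c a ha
  calc a * b * (a' * b')
      = a * (b * a') * b' := by group
    _ = a * (a' * b) * b' := by rw [← c3]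
    _ = (a * a') * (b * b') := by group
    _ = (a' * a) * (b' * b) := by rw [c1, c2]
    _ = a' * (a * b') * b := by group
    _ = a' * (b' * a) * b := by rw [c4]
    _ = a' * b' * (a * b) := by group

lemma gMcomm [A.Normal] (hA : IsMulCommutative A) (hB : IsMulCommutative B)
    (hAB : ∀ g : G, ∃ a ∈ A, ∃ b ∈ B, g = a * b) :
    ∀ x y : G, x ∈ Subgroup.centralizer (A : Set G) →
      y ∈ Subgroup.centralizer (A : Set G) → x * y = y * x := by
  haveI := hA
  intro x y hx hy
  obtain ⟨a, ha, b, hb, rfl⟩ := hAB x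
  obtain ⟨a', ha', b', hb', rfl⟩ := hAB y
  have hbc : b ∈ Subgroup.centralizer (A : Set G) := by
    have h := mul_mem (inv_mem (Subgroup.le_centralizer A ha)) hx
    simpa using h
  have hb'c : b' ∈ Subgroup.centralizer (A : Set G) := by
    have h := mul_mem (inv_mem (Subgroup.le_centralizer A ha')) hy
    simpa using h
  exact gKey hA hB a b a' b' ha hb ha' hb' hbc hb'c

lemma gCentM [A.Normal] (hA : IsMulCommutative A) (hB : IsMulCommutative B)
    (hAB : ∀ g : G, ∃ a ∈ A, ∃ b ∈ B, g = a * b) :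
    Subgroup.centralizer
        ((A ⊔ (B ⊓ Subgroup.centralizer (A : Set G)) : Subgroup G) : Set G) =
      A ⊔ (B ⊓ Subgroup.centralizer (A : Set G)) := by
  have hM : (A ⊔ (B ⊓ Subgroup.centralizer (A : Set G)) : Subgroup G) =
      Subgroup.centralizer (A : Set G) := (gCentA hA hAB).symm
  refine le_antisymm ?_ ?_
  · intro z hz
    have h1 : z ∈ Subgroup.centralizer (A : Set G) :=
      Subgroup.centralizer_le (SetLike.coe_subset_coe.mpr le_sup_left) hz
    rw [← hM] at h1
    exact h1
  · intro m hm
    rw [Subgroup.mem_centralizer_iff]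
    intro h hh
    have hm' : m ∈ Subgroup.centralizer (A : Set G) := hM ▸ hm
    have hh' : h ∈ Subgroup.centralizer (A : Set G) := hM ▸ (hh : h ∈ _)
    exact gMcomm hA hB hAB h m hh' hm'

lemma gL5a [A.Normal] (hA : IsMulCommutative A)
    (hAB : ∀ g : G, ∃ a ∈ A, ∃ b ∈ B, g = a * b) (H : Subgroup G) :
    A ⊓ Subgroup.centralizer (H : Set G) =
      A ⊓ Subgroup.centralizer ((B ⊓ (A ⊔ H) : Subgroup G) : Set G) := by
  haveI := hA
  ext x
  simp only [Subgroup.mem_inf]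
  constructor
  · rintro ⟨hxA, hxC⟩
    refine ⟨hxA, ?_⟩
    rw [Subgroup.mem_centralizer_iff]
    intro s hs
    have hs' : s ∈ B ⊓ (A ⊔ H) := hs
    obtain ⟨hsB, hsAH⟩ := Subgroup.mem_inf.mp hs'
    have hmul : s ∈ ((A : Set G) * (H : Set G)) := by
      rw [← Subgroup.normal_mul]
      exact hsAH
    obtain ⟨a, ha, h, hh, hprod⟩ := hmul
    rw [← hprod]
    have c1 : a * x = x * a := Subgroup.mul_comm_of_mem_isMulCommutative A ha hxA
    have c2 : h * x = x * h := Subgroup.mem_centralizer_iff.mp hxC h hh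
    calc a * h * x = a * (h * x) := by group
      _ = a * (x * h) := by rw [c2]
      _ = (a * x) * h := by group
      _ = (x * a) * h := by rw [c1]
      _ = x * (a * h) := by group
  · rintro ⟨hxA, hxC⟩
    refine ⟨hxA, ?_⟩
    rw [Subgroup.mem_centralizer_iff]
    intro h hh
    obtain ⟨a, ha, b, hb, rfl⟩ := hAB h
    have hbAH : b ∈ A ⊔ H := by
      have h1 : a * b ∈ A ⊔ H := (le_sup_right : H ≤ A ⊔ H) hh
      have h2 := mul_mem (inv_mem ((le_sup_left : A ≤ A ⊔ H) ha)) h1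
      simpa using h2
    have hbS : b ∈ B ⊓ (A ⊔ H) := Subgroup.mem_inf.mpr ⟨hb, hbAH⟩
    have c1 : a * x = x * a := Subgroup.mul_comm_of_mem_isMulCommutative A ha hxA
    have c2 : b * x = x * b := Subgroup.mem_centralizer_iff.mp hxC b hbS
    calc a * b * x = a * (b * x) := by group
      _ = a * (x * b) := by rw [c2]
      _ = (a * x) * b := by group
      _ = (x * a) * b := by rw [c1]
      _ = x * (a * b) := by group

lemma gL5b [A.Normal] (hA : IsMulCommutative A) (H : Subgroup G) :
    B ⊓ (A ⊔ Subgroup.centralizer (H : Set G)) ≤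
      B ⊓ Subgroup.centralizer ((A ⊓ H : Subgroup G) : Set G) := by
  haveI := hA
  intro b hb
  obtain ⟨hbB, hbAK⟩ := Subgroup.mem_inf.mp hb
  refine Subgroup.mem_inf.mpr ⟨hbB, ?_⟩
  have hmul : b ∈ ((A : Set G) * (Subgroup.centralizer (H : Set G) : Set G)) := by
    rw [← Subgroup.normal_mul]
    exact hbAK
  obtain ⟨a, ha, k, hk, hprod⟩ := hmul
  rw [Subgroup.mem_centralizer_iff]
  intro x hx
  obtain ⟨hxA, hxH⟩ := Subgroup.mem_inf.mp (hx : x ∈ A ⊓ H)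
  rw [← hprod]
  have c1 : x * a = a * x := Subgroup.mul_comm_of_mem_isMulCommutative A hxA ha
  have c2 : x * k = k * x := Subgroup.mem_centralizer_iff.mp hk x hxH
  calc x * (a * k) = (x * a) * k := by group
    _ = (a * x) * k := by rw [c1]
    _ = a * (x * k) := by group
    _ = a * (k * x) := by rw [c2]
    _ = (a * k) * x := by group


lemma gL6 [A.Normal] (hA : IsMulCommutative A) (hB : IsMulCommutative B)
    (hcop : Nat.Coprime (Nat.card A) (Nat.card B)) (X : Subgroup G) (hXA : X ≤ A) :
    Nat.card X * Nat.card (B ⊓ Subgroup.centralizer (X : Set G) : Subgroup G) ≤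
      Nat.card A * Nat.card (B ⊓ Subgroup.centralizer (A : Set G) : Subgroup G) ∧
      (Nat.card X * Nat.card (B ⊓ Subgroup.centralizer (X : Set G) : Subgroup G) =
        Nat.card A * Nat.card (B ⊓ Subgroup.centralizer (A : Set G) : Subgroup G) → X = A) := by
  haveI := hA; haveI := hB
  set C : Subgroup G := B ⊓ Subgroup.centralizer (A : Set G) with hCdef
  set CBX : Subgroup G := B ⊓ Subgroup.centralizer (X : Set G) with hCBXdef
  set X' : Subgroup ↥A := X.subgroupOf A with hX'def
  set φ₀ : ↥CBX →* MulAut ↥A := MulAut.conjNormal.comp CBX.subtype with hφ₀def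
  have happ : ∀ (q : ↥CBX) (a : ↥A), ((φ₀ q a : ↥A) : G) = ↑q * ↑a * (↑q : G)⁻¹ := by
    intro q a
    rw [hφ₀def]
    exact MulAut.conjNormal_apply _ _
  have hfix : ∀ (q : ↥CBX) (a : ↥A), (a : G) ∈ X → φ₀ q a = a := by
    intro q a ha
    obtain ⟨hqB, hqC⟩ := Subgroup.mem_inf.mp q.2
    apply Subtype.ext
    rw [happ]
    have hc : ↑a * ↑q = ↑q * (↑a : G) := Subgroup.mem_centralizer_iff.mp hqC ↑a ha
    rw [← hc, mul_inv_cancel_right]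
  have hinv : ∀ (q : ↥CBX) (a : ↥A), a ∈ X' → φ₀ q a ∈ X' := by
    intro q a ha
    have ha' : (a : G) ∈ X := ha
    have h2 : φ₀ q a = a := hfix q a ha'
    rw [h2]
    exact ha
  set ψ : ↥CBX →* MulAut (↥A ⧸ X') := quotAut φ₀ X' hinv with hψdef
  have hCleCBX : C ≤ CBX :=
    inf_le_inf_left B (Subgroup.centralizer_le (SetLike.coe_subset_coe.mpr hXA))
  have hker : ψ.ker = C.subgroupOf CBX := by
    ext q
    rw [MonoidHom.mem_ker, Subgroup.mem_subgroupOf]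
    constructor
    · intro hq
      obtain ⟨hqB, hqC⟩ := Subgroup.mem_inf.mp q.2
      have h7 : ∀ a : ↥A, φ₀ q a = a := by
        refine fix_of_coprime (φ₀ q) (n := orderOf q) ?_ ?_ X' ?_ ?_
        · rw [← map_pow, pow_orderOf_eq_one, map_one]
        · have hd : orderOf q ∣ Nat.card B :=
            (orderOf_dvd_natCard q).trans (Subgroup.card_dvd_of_le inf_le_left)
          exact Nat.Coprime.coprime_dvd_left hd hcop.symm
        · intro y hy
          exact hfix q y hy
        · intro a
          have h6 : ψ q (QuotientGroup.mk a) = QuotientGroup.mk a := by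
            rw [hq, MulAut.one_apply]
          rw [hψdef, quotAut_apply_mk] at h6
          exact (QuotientGroup.eq).mp h6.symm
      refine Subgroup.mem_inf.mpr ⟨hqB, ?_⟩
      rw [Subgroup.mem_centralizer_iff]
      intro h hh
      have h8 := congrArg (Subtype.val) (h7 ⟨h, hh⟩)
      rw [happ] at h8
      calc h * ↑q = (↑q * h * (↑q : G)⁻¹) * ↑q := by rw [h8]
        _ = ↑q * h := by group
    · intro hq
      obtain ⟨hqB, hqCA⟩ := Subgroup.mem_inf.mp hq
      ext a
      refine QuotientGroup.induction_on a (fun y => ?_)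
      rw [hψdef, quotAut_apply_mk, MulAut.one_apply]
      congr 1
      apply Subtype.ext
      rw [happ]
      have hc : ↑y * ↑q = ↑q * (↑y : G) := Subgroup.mem_centralizer_iff.mp hqCA ↑y y.2
      rw [← hc, mul_inv_cancel_right]
  have hQcomm : ∀ a b : ↥CBX ⧸ ψ.ker, a * b = b * a := by
    intro a b
    refine QuotientGroup.induction_on a (fun xa => ?_)
    refine QuotientGroup.induction_on b (fun xb => ?_)
    rw [← QuotientGroup.mk_mul, ← QuotientGroup.mk_mul]
    congr 1
    apply Subtype.ext
    exact Subgroup.mul_comm_of_mem_isMulCommutative B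
      (Subgroup.mem_inf.mp xa.2).1 (Subgroup.mem_inf.mp xb.2).1
  have hNcomm : ∀ a b : ↥A ⧸ X', a * b = b * a := fun a b =>
    QuotientGroup.induction_on a (fun x => QuotientGroup.induction_on b (fun y => by
      rw [← QuotientGroup.mk_mul, ← QuotientGroup.mk_mul, hA.is_comm.comm x y]))
  have hcop2 : Nat.Coprime (Nat.card (↥CBX ⧸ ψ.ker)) (Nat.card (↥A ⧸ X')) := by
    have d1 : Nat.card (↥CBX ⧸ ψ.ker) ∣ Nat.card B :=
      (Subgroup.card_quotient_dvd_card ψ.ker).trans (Subgroup.card_dvd_of_le inf_le_left)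
    have d2 : Nat.card (↥A ⧸ X') ∣ Nat.card A := Subgroup.card_quotient_dvd_card X'
    exact Nat.Coprime.coprime_dvd_right d2 (Nat.Coprime.coprime_dvd_left d1 hcop.symm)
  have hmain : Nat.card (↥CBX ⧸ ψ.ker) ≤ Nat.card (↥A ⧸ X') :=
    claimB' hQcomm hNcomm (QuotientGroup.kerLift ψ) (QuotientGroup.kerLift_injective ψ) hcop2
  have e1 : Nat.card CBX = Nat.card (↥CBX ⧸ ψ.ker) * Nat.card ψ.ker :=
    Subgroup.card_eq_card_quotient_mul_card_subgroup _
  have e2 : Nat.card ψ.ker = Nat.card C := by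
    rw [hker, myCardSubgroupOf, inf_eq_left.mpr hCleCBX]
  have e3 : Nat.card A = Nat.card (↥A ⧸ X') * Nat.card X' :=
    Subgroup.card_eq_card_quotient_mul_card_subgroup _
  have e4 : Nat.card X' = Nat.card X := by
    rw [hX'def, myCardSubgroupOf, inf_eq_left.mpr hXA]
  constructor
  · calc Nat.card X * Nat.card CBX
        = Nat.card X * (Nat.card (↥CBX ⧸ ψ.ker) * Nat.card C) := by rw [e1, e2]
      _ ≤ Nat.card X * (Nat.card (↥A ⧸ X') * Nat.card C) :=
          Nat.mul_le_mul_left _ (Nat.mul_le_mul_right _ hmain)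
      _ = (Nat.card (↥A ⧸ X') * Nat.card X') * Nat.card C := by rw [← e4]; ring
      _ = Nat.card A * Nat.card C := by rw [← e3]
  · intro heq
    have hX'pos : 0 < Nat.card X' := Nat.card_pos
    have hCpos : 0 < Nat.card C := Nat.card_pos
    have h9 : Nat.card (↥CBX ⧸ ψ.ker) = Nat.card (↥A ⧸ X') := by
      rw [e1, e2, e3, ← e4] at heq
      refine Nat.eq_of_mul_eq_mul_right (Nat.mul_pos hX'pos hCpos) ?_
      calc Nat.card (↥CBX ⧸ ψ.ker) * (Nat.card X' * Nat.card C)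
          = Nat.card X' * (Nat.card (↥CBX ⧸ ψ.ker) * Nat.card C) := by ring
        _ = Nat.card (↥A ⧸ X') * Nat.card X' * Nat.card C := heq
        _ = Nat.card (↥A ⧸ X') * (Nat.card X' * Nat.card C) := by ring
    have h11 : Nat.card (↥A ⧸ X') = 1 := by
      have hco : Nat.Coprime (Nat.card (↥A ⧸ X')) (Nat.card (↥A ⧸ X')) := h9 ▸ hcop2
      rw [Nat.Coprime, Nat.gcd_self] at hco
      exact hco
    have h12 : Nat.card A = Nat.card X := by rw [e3, h11, one_mul, e4]
    exact Subgroup.eq_of_le_of_card_ge hXA (le_of_eq h12)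

lemma gL7 [A.Normal] (hA : IsMulCommutative A) (hB : IsMulCommutative B)
    (hcop : Nat.Coprime (Nat.card A) (Nat.card B)) (S : Subgroup G) (hSB : S ≤ B) :
    Nat.card S * Nat.card (A ⊓ Subgroup.centralizer (S : Set G) : Subgroup G) ≤
      Nat.card A * Nat.card (B ⊓ Subgroup.centralizer (A : Set G) : Subgroup G) ∧
      (Nat.card S * Nat.card (A ⊓ Subgroup.centralizer (S : Set G) : Subgroup G) =
        Nat.card A * Nat.card (B ⊓ Subgroup.centralizer (A : Set G) : Subgroup G) →
        S = B ⊓ Subgroup.centralizer (A : Set G)) := by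
  haveI := hA; haveI := hB
  set C : Subgroup G := B ⊓ Subgroup.centralizer (A : Set G) with hCdef
  set φ₀ : ↥S →* MulAut ↥A := MulAut.conjNormal.comp S.subtype with hφ₀def
  have happ : ∀ (q : ↥S) (a : ↥A), ((φ₀ q a : ↥A) : G) = ↑q * ↑a * (↑q : G)⁻¹ := by
    intro q a
    rw [hφ₀def]
    exact MulAut.conjNormal_apply _ _
  have hker : φ₀.ker = C.subgroupOf S := by
    ext q
    rw [MonoidHom.mem_ker, Subgroup.mem_subgroupOf, Subgroup.mem_inf]
    constructor
    · intro hq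
      refine ⟨hSB q.2, ?_⟩
      rw [Subgroup.mem_centralizer_iff]
      intro h hh
      have h8 : φ₀ q ⟨h, hh⟩ = ⟨h, hh⟩ := by rw [hq, MulAut.one_apply]
      have h9 := congrArg Subtype.val h8
      rw [happ] at h9
      calc h * ↑q = (↑q * h * (↑q : G)⁻¹) * ↑q := by rw [h9]
        _ = ↑q * h := by group
    · rintro ⟨hqB, hqCA⟩
      ext a
      have hc : ↑a * ↑q = ↑q * (↑a : G) := Subgroup.mem_centralizer_iff.mp hqCA ↑a a.2
      show ((φ₀ q a : ↥A) : G) = ((1 : MulAut ↥A) a : G)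
      rw [MulAut.one_apply, happ, ← hc, mul_inv_cancel_right]
  set φ' : (↥S ⧸ φ₀.ker) →* MulAut ↥A := QuotientGroup.kerLift φ₀ with hφ'def
  have hfixeq : fixedSub φ' = (Subgroup.centralizer (S : Set G)).subgroupOf A := by
    ext a
    rw [mem_fixedSub, Subgroup.mem_subgroupOf]
    constructor
    · intro hfa
      rw [Subgroup.mem_centralizer_iff]
      intro h hh
      have h8 : φ' (QuotientGroup.mk ⟨h, hh⟩) a = a := hfa _
      rw [hφ'def, QuotientGroup.kerLift_mk] at h8
      have h9 := congrArg Subtype.val h8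
      rw [happ] at h9
      calc h * ↑a = (h * ↑a * h⁻¹) * h := by group
        _ = ↑a * h := by rw [h9]
    · intro hc q
      refine QuotientGroup.induction_on q (fun s => ?_)
      rw [hφ'def, QuotientGroup.kerLift_mk]
      apply Subtype.ext
      rw [happ]
      have h10 : ↑s * ↑a = ↑a * (↑s : G) :=
        Subgroup.mem_centralizer_iff.mp hc ↑s s.2
      rw [h10, mul_inv_cancel_right]
  have hQcomm : ∀ a b : ↥S ⧸ φ₀.ker, a * b = b * a := by
    intro a b
    refine QuotientGroup.induction_on a (fun xa => ?_)
    refine QuotientGroup.induction_on b (fun xb => ?_)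
    rw [← QuotientGroup.mk_mul, ← QuotientGroup.mk_mul]
    congr 1
    apply Subtype.ext
    exact Subgroup.mul_comm_of_mem_isMulCommutative B (hSB xa.2) (hSB xb.2)
  have hcop2 : Nat.Coprime (Nat.card (↥S ⧸ φ₀.ker)) (Nat.card ↥A) := by
    have d1 : Nat.card (↥S ⧸ φ₀.ker) ∣ Nat.card B :=
      (Subgroup.card_quotient_dvd_card φ₀.ker).trans (Subgroup.card_dvd_of_le hSB)
    exact Nat.Coprime.coprime_dvd_left d1 hcop.symm
  have happly := claimBplus hQcomm (fun a b => hA.is_comm.comm a b) φ'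
    (QuotientGroup.kerLift_injective φ₀) hcop2
  have e1 : Nat.card S = Nat.card (↥S ⧸ φ₀.ker) * Nat.card φ₀.ker :=
    Subgroup.card_eq_card_quotient_mul_card_subgroup _
  have e2 : Nat.card φ₀.ker = Nat.card (C ⊓ S : Subgroup G) := by
    rw [hker, myCardSubgroupOf]
  have e5 : Nat.card (fixedSub φ') =
      Nat.card (A ⊓ Subgroup.centralizer (S : Set G) : Subgroup G) := by
    rw [hfixeq, myCardSubgroupOf, inf_comm]
  have hCS : Nat.card (C ⊓ S : Subgroup G) ≤ Nat.card C :=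
    Subgroup.card_le_of_le inf_le_left
  have h1 := happly.1
  have hbound : Nat.card S * Nat.card (A ⊓ Subgroup.centralizer (S : Set G) : Subgroup G) ≤
      Nat.card A * Nat.card C := by
    calc Nat.card S * Nat.card (A ⊓ Subgroup.centralizer (S : Set G) : Subgroup G)
        = (Nat.card (↥S ⧸ φ₀.ker) * Nat.card (fixedSub φ')) *
            Nat.card (C ⊓ S : Subgroup G) := by rw [e1, e2, ← e5]; ring
      _ ≤ Nat.card A * Nat.card C := Nat.mul_le_mul h1 hCS
  refine ⟨hbound, ?_⟩
  intro heq
  have hCpos : 0 < Nat.card C := Nat.card_pos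
  have hApos : 0 < Nat.card A := Nat.card_pos
  have heq2 : (Nat.card (↥S ⧸ φ₀.ker) * Nat.card (fixedSub φ')) *
      Nat.card (C ⊓ S : Subgroup G) = Nat.card A * Nat.card C := by
    rw [← heq, e1, e2, ← e5]; ring
  have hqf : Nat.card (↥S ⧸ φ₀.ker) * Nat.card (fixedSub φ') = Nat.card A := by
    refine Nat.le_antisymm h1 ?_
    refine Nat.le_of_mul_le_mul_right ?_ hCpos
    calc Nat.card A * Nat.card C
        = (Nat.card (↥S ⧸ φ₀.ker) * Nat.card (fixedSub φ')) *
            Nat.card (C ⊓ S : Subgroup G) := heq2.symm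
      _ ≤ (Nat.card (↥S ⧸ φ₀.ker) * Nat.card (fixedSub φ')) * Nat.card C :=
          Nat.mul_le_mul_left _ hCS
  have hcs : Nat.card (C ⊓ S : Subgroup G) = Nat.card C := by
    refine Nat.le_antisymm hCS ?_
    refine Nat.le_of_mul_le_mul_left ?_ hApos
    calc Nat.card A * Nat.card C
        = (Nat.card (↥S ⧸ φ₀.ker) * Nat.card (fixedSub φ')) *
            Nat.card (C ⊓ S : Subgroup G) := heq2.symm
      _ = Nat.card A * Nat.card (C ⊓ S : Subgroup G) := by rw [hqf]
      _ ≤ Nat.card A * Nat.card (C ⊓ S : Subgroup G) := le_rfl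
  have hq1 : Nat.card (↥S ⧸ φ₀.ker) = 1 := happly.2 hqf
  have hCleS : C ≤ S := by
    have h13 : C ⊓ S = C :=
      Subgroup.eq_of_le_of_card_ge inf_le_left (le_of_eq hcs.symm)
    exact inf_eq_left.mp h13
  have hcardS : Nat.card S = Nat.card C := by rw [e1, hq1, one_mul, e2, hcs]
  exact (Subgroup.eq_of_le_of_card_ge hCleS (le_of_eq hcardS)).symm

end MainG

/-- The Chermak-Delgado measure of a subgroup `H` of `G`: `|H| · |C_G(H)|`. -/
noncomputable def cdMeasure (G : Type*) [Group G] (H : Subgroup G) : ℕ :=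
  Nat.card H * Nat.card (Subgroup.centralizer (H : Set G))

/-- The Chermak-Delgado lattice of `G`: the set of subgroups whose
Chermak-Delgado measure is maximal. -/
def CD (G : Type*) [Group G] : Set (Subgroup G) :=
  {H : Subgroup G | ∀ K : Subgroup G, cdMeasure G K ≤ cdMeasure G H}


theorem stmt_14 (G : Type*) [Group G] [Finite G]
    (A B : Subgroup G) (hA : IsMulCommutative A) (hB : IsMulCommutative B)
    (hcop : Nat.Coprime (Nat.card A) (Nat.card B)) [A.Normal]
    (hAB : ∀ g : G, ∃ a ∈ A, ∃ b ∈ B, g = a * b) :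
    cdMeasure G (A ⊔ (B ⊓ Subgroup.centralizer (A : Set G))) =
      Nat.card A ^ 2 * Nat.card (B ⊓ Subgroup.centralizer (A : Set G) : Subgroup G) ^ 2 ∧
    CD G = {A ⊔ (B ⊓ Subgroup.centralizer (A : Set G))} := by
  haveI := hA; haveI := hB
  set C : Subgroup G := B ⊓ Subgroup.centralizer (A : Set G) with hCdef
  set M : Subgroup G := A ⊔ C with hMdef
  have hMA : M = Subgroup.centralizer (A : Set G) := by
    rw [hMdef, hCdef]
    exact (gCentA hA hAB).symm
  have hcentM : Subgroup.centralizer (M : Set G) = M := by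
    rw [hMdef, hCdef]
    exact gCentM hA hB hAB
  have hBM : B ⊓ M = C := by
    rw [hMA]
  have hcardM : Nat.card M = Nat.card A * Nat.card C := by
    rw [gDecomp hcop hAB M le_sup_left, hBM]
  have hDM : cdMeasure G M = (Nat.card A * Nat.card C) * (Nat.card A * Nat.card C) := by
    simp only [cdMeasure]
    rw [hcentM, hcardM]
  have hbound : ∀ H : Subgroup G,
      cdMeasure G H ≤ (Nat.card A * Nat.card C) * (Nat.card A * Nat.card C) ∧
      (cdMeasure G H = (Nat.card A * Nat.card C) * (Nat.card A * Nat.card C) → H = M) := by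
    intro H
    have f1 : Nat.card H =
        Nat.card (A ⊓ H : Subgroup G) * Nat.card (B ⊓ (A ⊔ H) : Subgroup G) :=
      gFactor hcop hAB H
    have f2 : Nat.card (Subgroup.centralizer (H : Set G)) =
        Nat.card (A ⊓ Subgroup.centralizer (H : Set G) : Subgroup G) *
          Nat.card (B ⊓ (A ⊔ Subgroup.centralizer (H : Set G)) : Subgroup G) :=
      gFactor hcop hAB _
    have f3 : Nat.card (A ⊓ Subgroup.centralizer (H : Set G) : Subgroup G) =
        Nat.card (A ⊓ Subgroup.centralizer ((B ⊓ (A ⊔ H) : Subgroup G) : Set G) : Subgroup G) := by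
      rw [gL5a hA hAB H]
    have f4 : Nat.card (B ⊓ (A ⊔ Subgroup.centralizer (H : Set G)) : Subgroup G) ≤
        Nat.card (B ⊓ Subgroup.centralizer ((A ⊓ H : Subgroup G) : Set G) : Subgroup G) :=
      Subgroup.card_le_of_le (gL5b hA H)
    have P1 := gL6 hA hB hcop (A ⊓ H) inf_le_left
    have P2 := gL7 hA hB hcop (B ⊓ (A ⊔ H)) inf_le_left
    rw [← hCdef] at P1 P2
    have hm : cdMeasure G H =
        (Nat.card (A ⊓ H : Subgroup G) * Nat.card (B ⊓ (A ⊔ H) : Subgroup G)) *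
          (Nat.card (A ⊓ Subgroup.centralizer ((B ⊓ (A ⊔ H) : Subgroup G) : Set G) : Subgroup G) *
            Nat.card (B ⊓ (A ⊔ Subgroup.centralizer (H : Set G)) : Subgroup G)) := by
      simp only [cdMeasure]
      rw [f1, f2, f3]
    have hle1 : cdMeasure G H ≤
        (Nat.card (A ⊓ H : Subgroup G) *
            Nat.card (B ⊓ Subgroup.centralizer ((A ⊓ H : Subgroup G) : Set G) : Subgroup G)) *
          (Nat.card (B ⊓ (A ⊔ H) : Subgroup G) *
            Nat.card (A ⊓ Subgroup.centralizer ((B ⊓ (A ⊔ H) : Subgroup G) : Set G) : Subgroup G)) := by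
      rw [hm]
      calc (Nat.card (A ⊓ H : Subgroup G) * Nat.card (B ⊓ (A ⊔ H) : Subgroup G)) *
            (Nat.card (A ⊓ Subgroup.centralizer ((B ⊓ (A ⊔ H) : Subgroup G) : Set G) : Subgroup G) *
              Nat.card (B ⊓ (A ⊔ Subgroup.centralizer (H : Set G)) : Subgroup G))
          ≤ (Nat.card (A ⊓ H : Subgroup G) * Nat.card (B ⊓ (A ⊔ H) : Subgroup G)) *
            (Nat.card (A ⊓ Subgroup.centralizer ((B ⊓ (A ⊔ H) : Subgroup G) : Set G) : Subgroup G) *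
              Nat.card (B ⊓ Subgroup.centralizer ((A ⊓ H : Subgroup G) : Set G) : Subgroup G)) :=
            Nat.mul_le_mul_left _ (Nat.mul_le_mul_left _ f4)
        _ = (Nat.card (A ⊓ H : Subgroup G) *
              Nat.card (B ⊓ Subgroup.centralizer ((A ⊓ H : Subgroup G) : Set G) : Subgroup G)) *
            (Nat.card (B ⊓ (A ⊔ H) : Subgroup G) *
              Nat.card (A ⊓ Subgroup.centralizer ((B ⊓ (A ⊔ H) : Subgroup G) : Set G) : Subgroup G)) := by
            ring
    have hle : cdMeasure G H ≤ (Nat.card A * Nat.card C) * (Nat.card A * Nat.card C) :=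
      le_trans hle1 (Nat.mul_le_mul P1.1 P2.1)
    refine ⟨hle, ?_⟩
    intro heq
    have hP2pos : 0 < Nat.card (B ⊓ (A ⊔ H) : Subgroup G) *
        Nat.card (A ⊓ Subgroup.centralizer ((B ⊓ (A ⊔ H) : Subgroup G) : Set G) : Subgroup G) :=
      Nat.mul_pos Nat.card_pos Nat.card_pos
    have hDpos : 0 < Nat.card A * Nat.card C := Nat.mul_pos Nat.card_pos Nat.card_pos
    have hprod : (Nat.card (A ⊓ H : Subgroup G) *
          Nat.card (B ⊓ Subgroup.centralizer ((A ⊓ H : Subgroup G) : Set G) : Subgroup G)) *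
        (Nat.card (B ⊓ (A ⊔ H) : Subgroup G) *
          Nat.card (A ⊓ Subgroup.centralizer ((B ⊓ (A ⊔ H) : Subgroup G) : Set G) : Subgroup G)) =
        (Nat.card A * Nat.card C) * (Nat.card A * Nat.card C) :=
      le_antisymm (Nat.mul_le_mul P1.1 P2.1) (heq ▸ hle1)
    have hP1 : Nat.card (A ⊓ H : Subgroup G) *
        Nat.card (B ⊓ Subgroup.centralizer ((A ⊓ H : Subgroup G) : Set G) : Subgroup G) =
        Nat.card A * Nat.card C := by
      refine Nat.le_antisymm P1.1 ?_
      refine Nat.le_of_mul_le_mul_right ?_ hP2pos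
      calc (Nat.card A * Nat.card C) *
            (Nat.card (B ⊓ (A ⊔ H) : Subgroup G) *
              Nat.card (A ⊓ Subgroup.centralizer ((B ⊓ (A ⊔ H) : Subgroup G) : Set G) : Subgroup G))
          ≤ (Nat.card A * Nat.card C) * (Nat.card A * Nat.card C) :=
            Nat.mul_le_mul_left _ P2.1
        _ = _ := hprod.symm
    have hP2 : Nat.card (B ⊓ (A ⊔ H) : Subgroup G) *
        Nat.card (A ⊓ Subgroup.centralizer ((B ⊓ (A ⊔ H) : Subgroup G) : Set G) : Subgroup G) =
        Nat.card A * Nat.card C := by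
      refine Nat.le_antisymm P2.1 ?_
      have hpos1 : 0 < Nat.card (A ⊓ H : Subgroup G) *
          Nat.card (B ⊓ Subgroup.centralizer ((A ⊓ H : Subgroup G) : Set G) : Subgroup G) := by
        rw [hP1]; exact hDpos
      refine Nat.le_of_mul_le_mul_left ?_ hpos1
      calc (Nat.card (A ⊓ H : Subgroup G) *
            Nat.card (B ⊓ Subgroup.centralizer ((A ⊓ H : Subgroup G) : Set G) : Subgroup G)) *
            (Nat.card A * Nat.card C)
          = (Nat.card A * Nat.card C) * (Nat.card A * Nat.card C) := by rw [hP1]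
        _ = _ := hprod.symm
        _ ≤ _ := le_rfl
    have hXA : A ⊓ H = A := P1.2 hP1
    have hSC : B ⊓ (A ⊔ H) = C := P2.2 hP2
    have hAleH : A ≤ H := inf_eq_left.mp hXA
    have hAH : A ⊔ H = H := sup_eq_right.mpr hAleH
    rw [hAH] at hSC
    have hCleH : C ≤ H := hSC ▸ inf_le_right
    have hMleH : M ≤ H := sup_le hAleH hCleH
    have hcardH : Nat.card H = Nat.card M := by
      rw [f1, hXA, hAH, hSC, hcardM]
    exact (Subgroup.eq_of_le_of_card_ge hMleH (le_of_eq hcardH)).symm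
  constructor
  · rw [hDM]
    ring
  · ext H
    simp only [CD, Set.mem_setOf_eq, Set.mem_singleton_iff]
    constructor
    · intro hH
      have h1 : cdMeasure G H = (Nat.card A * Nat.card C) * (Nat.card A * Nat.card C) := by
        refine le_antisymm (hbound H).1 ?_
        have h2 := hH M
        rw [hDM] at h2
        exact h2
      exact (hbound H).2 h1
    · intro hH K'
      rw [hH, hDM]
      exact (hbound K').1
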